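/- A λ-term M is locally periodic if and only if M is globally periodic. -/

import Mathlib

/-- Untyped λ-terms in de Bruijn notation (the variables are `ℕ`). -/
inductive Lam : Type
  | var : ℕ → Lam
  | app : Lam → Lam → Lam
  | abs : Lam → Lam
  deriving DecidableEq

namespace Lam

/-- Shift the free de Bruijn indices `≥ d` up by one. -/
def lift (d : ℕ) : Lam → Lam
  | var n => if n < d then var n else var (n + 1)
  | app s t => app (lift d s) (lift d t)
  | abs t => abs (lift (d + 1) t)

/-- Capture-avoiding substitution `t[k := u]`. -/
def subst : Lam → ℕ → Lam → Lam
  | var n, k, u => if n < k then var n else if n = k then u else var (n - 1)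
  | app s t, k, u => app (subst s k u) (subst t k u)
  | abs t, k, u => abs (subst t (k + 1) (lift 0 u))

/-- One-step β-reduction `→β`: the compatible closure of the β-rule. -/
inductive Beta : Lam → Lam → Prop
  | beta (t u : Lam) : Beta (Lam.app (Lam.abs t) u) (subst t 0 u)
  | appL {s s' : Lam} (t : Lam) : Beta s s' → Beta (Lam.app s t) (Lam.app s' t)
  | appR (s : Lam) {t t' : Lam} : Beta t t' → Beta (Lam.app s t) (Lam.app s t')
  | abs {t t' : Lam} : Beta t t' → Beta (Lam.abs t) (Lam.abs t')

/-- `↠β`: the reflexive–transitive closure of `→β`. -/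
def BetaStar : Lam → Lam → Prop := Relation.ReflTransGen Beta

/-- `→β^k`: the `k`-fold composition of `→β`. -/
def BetaN : ℕ → Lam → Lam → Prop
  | 0, s, t => s = t
  | k + 1, s, t => ∃ u, Beta s u ∧ BetaN k u t

/-- `=β`, β-convertibility: the equivalence closure of `→β`. -/
inductive Conv : Lam → Lam → Prop
  | rel {s t : Lam} : Beta s t → Conv s t
  | refl (s : Lam) : Conv s s
  | symm {s t : Lam} : Conv s t → Conv t s
  | trans {s t u : Lam} : Conv s t → Conv t u → Conv s u

/-- The free variables of a term (as de Bruijn indices). -/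
def FV : Lam → Finset ℕ
  | var n => {n}
  | app s t => FV s ∪ FV t
  | abs t => ((FV t).erase 0).image (· - 1)

/-- `Y` is a fixed point combinator (fpc): `Y x =β x (Y x)` for a variable `x` not free in `Y`. -/
def IsFPC (Y : Lam) : Prop :=
  ∀ x : ℕ, x ∉ FV Y → Conv (app Y (var x)) (app (var x) (app Y (var x)))

/-- `I = λx.x` -/
def combI : Lam := abs (var 0)

/-- `S = λxyz.xz(yz)` -/
def combS : Lam := abs (abs (abs (app (app (var 2) (var 0)) (app (var 1) (var 0)))))

/-- `B = λxyz.x(yz)` -/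
def combB : Lam := abs (abs (abs (app (var 2) (app (var 1) (var 0)))))

/-- `δ = λab.b(ab)` -/
def delta : Lam := abs (abs (app (var 0) (app (var 1) (var 0))))

/-- `η = λxf.f(xxf)` -/
def etaC : Lam := abs (abs (app (var 0) (app (app (var 1) (var 1)) (var 0))))

/-- Curry's fpc `Y₀ = λf.(λx.f(xx))(λx.f(xx))` -/
def curryY : Lam :=
  abs (app (abs (app (var 1) (app (var 0) (var 0))))
    (abs (app (var 1) (app (var 0) (var 0)))))

/-- `A B ⋯ B`: `A` applied to `n` copies of `B`, associating to the left. -/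
def appN (A B : Lam) : ℕ → Lam
  | 0 => A
  | n + 1 => app (appN A B n) B

/-- `M N₁ ⋯ Nₘ`: `M` applied to the terms in `L`, associating to the left. -/
def appList (M : Lam) (L : List Lam) : Lam := L.foldl app M

/-- `M` is an abstraction. -/
def IsAbs : Lam → Prop
  | abs _ => True
  | _ => False

/-- A head reduction step:
    `λx₁…xₙ.(λy.M)N N₁…Nₘ →h λx₁…xₙ.M[y:=N] N₁…Nₘ`. -/
inductive HeadStep : Lam → Lam → Prop
  | beta (t u : Lam) : HeadStep (Lam.app (Lam.abs t) u) (subst t 0 u)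
  | app {s s' : Lam} (t : Lam) : ¬ IsAbs s → HeadStep s s' → HeadStep (Lam.app s t) (Lam.app s' t)
  | abs {t t' : Lam} : HeadStep t t' → HeadStep (Lam.abs t) (Lam.abs t')

/-- `→h^k`: `k`-fold head reduction. -/
def HeadSteps : ℕ → Lam → Lam → Prop
  | 0, s, t => s = t
  | k + 1, s, t => ∃ u, HeadStep s u ∧ HeadSteps k u t

/-- `λ^n.t`: `n` abstractions in front of `t`. -/
def absN : ℕ → Lam → Lam
  | 0, t => t
  | n + 1, t => abs (absN n t)

/-- The head normal form `λx₁…xₙ. y A₁ ⋯ Aₘ` (de Bruijn head variable `y`). -/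
def mkHnf (n y : ℕ) (args : List Lam) : Lam := absN n (appList (var y) args)

/-- Head normal forms. -/
def IsHnf (M : Lam) : Prop := ∃ n y args, M = mkHnf n y args

/-- `M` has a head normal form (its head reduction reaches an hnf). -/
def HasHnf (M : Lam) : Prop := ∃ k H, HeadSteps k M H ∧ IsHnf H

/-- Nodes of a (clocked) Böhm Tree, seen as an infinite λ⊥-term. -/
inductive BTN : Type
  | lam : BTN
  | app : BTN
  | var : ℕ → BTN
  | bot : BTN
  deriving DecidableEq

/-- `CBT M p o a`: in the clocked Böhm Tree of `M`, the position `p`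
    (a sequence over `{0,1,2}`: `0` descends under an abstraction, `1` and `2` to the
    left and right parts of an application) carries the node `o` with annotation `a`
    (`a = some k` exactly at the roots of the coinductive blocks, where `k` is the number
    of head reduction steps needed to reach the hnf producing that block). -/
inductive CBT : Lam → List ℕ → BTN → Option ℕ → Prop
  | bot {M : Lam} : ¬ HasHnf M → CBT M [] BTN.bot none
  | lam {M : Lam} {k n y : ℕ} {args : List Lam} {i : ℕ} :
      HeadSteps k M (mkHnf n y args) → i < n →
      CBT M (List.replicate i 0) BTN.lam (if i = 0 then some k else none)
  | app {M : Lam} {k n y : ℕ} {args : List Lam} {j : ℕ} :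
      HeadSteps k M (mkHnf n y args) → j < args.length →
      CBT M (List.replicate n 0 ++ List.replicate j 1) BTN.app
        (if n = 0 ∧ j = 0 then some k else none)
  | var {M : Lam} {k n y : ℕ} {args : List Lam} :
      HeadSteps k M (mkHnf n y args) →
      CBT M (List.replicate n 0 ++ List.replicate args.length 1) (BTN.var y)
        (if n = 0 ∧ args.length = 0 then some k else none)
  | child {M : Lam} {k n y : ℕ} {args : List Lam} {i : ℕ} {q : List ℕ} {o : BTN} {a : Option ℕ} :
      HeadSteps k M (mkHnf n y args) → (h : i < args.length) →
      CBT (args.get ⟨i, h⟩) q o a →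
      CBT M (List.replicate n 0 ++ List.replicate (args.length - 1 - i) 1 ++ 2 :: q) o a

/-- The underlying (annotation-free) Böhm Tree: node `o` at position `p`. -/
def BTNode (M : Lam) (p : List ℕ) (o : BTN) : Prop := ∃ a, CBT M p o a

/-- `cBT M` and `cBT N` have the same underlying (annotation-free) Böhm Tree. -/
def SameBT (M N : Lam) : Prop := ∀ (p : List ℕ) (o : BTN), BTNode M p o ↔ BTNode N p o

/-- At every position of length `≥ l` where both clocked Böhm Trees are annotated,
    the annotation of `cBT M` is `≤` the annotation of `cBT N`. -/
def AnnLeFrom (l : ℕ) (M N : Lam) : Prop :=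
  ∀ (p : List ℕ) (o₁ o₂ : BTN) (k₁ k₂ : ℕ), l ≤ p.length →
    CBT M p o₁ (some k₁) → CBT N p o₂ (some k₂) → k₁ ≤ k₂

/-- At every position of length `≥ l` where both clocked Böhm Trees are annotated,
    the annotations of `cBT M` and `cBT N` are equal. -/
def AnnEqFrom (l : ℕ) (M N : Lam) : Prop :=
  ∀ (p : List ℕ) (o₁ o₂ : BTN) (k₁ k₂ : ℕ), l ≤ p.length →
    CBT M p o₁ (some k₁) → CBT N p o₂ (some k₂) → k₁ = k₂

/-- `cBT M ≤ cBT N`: same underlying Böhm Tree and pointwise `≤` on annotations;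
    i.e. `M` improves `N` globally. -/
def CBTle (M N : Lam) : Prop := SameBT M N ∧ AnnLeFrom 0 M N

/-- `M` improves `N` eventually. -/
def ImprovesEventually (M N : Lam) : Prop := SameBT M N ∧ ∃ l, AnnLeFrom l M N

/-- `M` matches `N` eventually. -/
def MatchesEventually (M N : Lam) : Prop := SameBT M N ∧ ∃ l, AnnEqFrom l M N

/-- `TermAt M σ R`: `R` is the λ-term at position `σ` in the Böhm Tree of `M`
    (i.e. the subtree of `BT(M)` at `σ` is `BT(R)`). -/
inductive TermAt : Lam → List ℕ → Lam → Prop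
  | refl (M : Lam) : TermAt M [] M
  | lam {M : Lam} {k n y : ℕ} {args : List Lam} {i : ℕ} :
      HeadSteps k M (mkHnf n y args) → i ≤ n →
      TermAt M (List.replicate i 0) (mkHnf (n - i) y args)
  | spine {M : Lam} {k n y : ℕ} {args : List Lam} {j : ℕ} :
      HeadSteps k M (mkHnf n y args) → j ≤ args.length →
      TermAt M (List.replicate n 0 ++ List.replicate j 1)
        (appList (Lam.var y) (args.take (args.length - j)))
  | child {M : Lam} {k n y : ℕ} {args : List Lam} {i : ℕ} {q : List ℕ} {R : Lam} :
      HeadSteps k M (mkHnf n y args) → (h : i < args.length) →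
      TermAt (args.get ⟨i, h⟩) q R →
      TermAt M (List.replicate n 0 ++ List.replicate (args.length - 1 - i) 1 ++ 2 :: q) R

/-- `M` is periodic at the nonempty position `σ` of `BT(M)`: `M =β M_σ`. -/
def PeriodicAt (M : Lam) (σ : List ℕ) : Prop :=
  σ ≠ [] ∧ (∃ o, BTNode M σ o) ∧ ∃ R, TermAt M σ R ∧ Conv M R

/-- `M` is locally periodic: every infinite path through `BT(M)` passes through a
    position at which `M` is periodic. -/
def LocallyPeriodic (M : Lam) : Prop :=
  ∀ π : ℕ → ℕ, (∀ n : ℕ, ∃ o, BTNode M (List.ofFn fun i : Fin n => π i) o) →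
    ∃ n : ℕ, PeriodicAt M (List.ofFn fun i : Fin n => π i)

/-- Nodes of a Böhm Tree context. -/
inductive CN : Type
  | lam : CN
  | app : CN
  | bot : CN
  | var : ℕ → CN
  | hole : ℕ → CN
  deriving DecidableEq

def BTN.toCN : BTN → CN
  | BTN.lam => CN.lam
  | BTN.app => CN.app
  | BTN.var n => CN.var n
  | BTN.bot => CN.bot

/-- Finite λ⊥-terms with holes `□ᵢ`. -/
inductive LamB : Type
  | var : ℕ → LamB
  | app : LamB → LamB → LamB
  | abs : LamB → LamB
  | bot : LamB
  | hole : ℕ → LamB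
  deriving DecidableEq

def LamB.head : LamB → CN
  | LamB.var n => CN.var n
  | LamB.app _ _ => CN.app
  | LamB.abs _ => CN.lam
  | LamB.bot => CN.bot
  | LamB.hole i => CN.hole i

/-- The node of a λ⊥-context at a position (sequences over `{0,1,2}`). -/
def LamB.nodeAt : LamB → List ℕ → Option CN
  | t, [] => some t.head
  | LamB.abs t, 0 :: p => LamB.nodeAt t p
  | LamB.app s _, 1 :: p => LamB.nodeAt s p
  | LamB.app _ t, 2 :: p => LamB.nodeAt t p
  | _, _ :: _ => none

/-- Redex-free λ⊥-contexts (= finite Böhm Trees whose leaves may also be holes). -/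
def LamB.RedexFree : LamB → Prop
  | LamB.var _ => True
  | LamB.bot => True
  | LamB.hole _ => True
  | LamB.abs t => LamB.RedexFree t
  | LamB.app (LamB.abs _) _ => False
  | LamB.app s t => LamB.RedexFree s ∧ LamB.RedexFree t

/-- `M` is globally periodic: there is a Böhm Tree context `C[]₁⋯[]ₙ` (not a bare hole)
    and terms `Mᵢ` such that `M = C[M₁]⋯[Mₙ]` — i.e. `BT(M)` agrees with `C` outside the
    holes and `Mᵢ` is the term of `M` at the position of hole `i` — with `M =β Mᵢ`. -/
def GloballyPeriodic (M : Lam) : Prop :=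
  ∃ (C : LamB) (Ms : ℕ → Lam),
    LamB.RedexFree C ∧ (∀ i, C ≠ LamB.hole i) ∧
    (∀ (p : List ℕ) (o : BTN), LamB.nodeAt C p = some (BTN.toCN o) → BTNode M p o) ∧
    (∀ (p : List ℕ) (o : BTN), BTNode M p o →
      LamB.nodeAt C p = some (BTN.toCN o) ∨
        ∃ q r i, p = q ++ r ∧ LamB.nodeAt C q = some (CN.hole i)) ∧
    (∀ (p : List ℕ) (i : ℕ), LamB.nodeAt C p = some (CN.hole i) →
      TermAt M p (Ms i) ∧ Conv M (Ms i))

attribute [local instance] Classical.propDecidable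

/-! ### Part 1: head reduction determinism and hnf facts -/

lemma appList_append_single (M : Lam) (l : List Lam) (a : Lam) :
    appList M (l ++ [a]) = app (appList M l) a := by
  simp [appList]

lemma appList_ne_abs (y : ℕ) (l : List Lam) (t : Lam) : appList (var y) l ≠ abs t := by
  induction l using List.reverseRecOn with
  | nil => simp [appList]
  | append_singleton l a ih => rw [appList_append_single]; simp

lemma appList_eq_app {y : ℕ} {l : List Lam} {A B : Lam} (h : appList (var y) l = app A B) :
    ∃ l', l = l' ++ [B] ∧ A = appList (var y) l' := by
  induction l using List.reverseRecOn with
  | nil => simp [appList] at h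
  | append_singleton l a ih =>
    rw [appList_append_single] at h
    injection h with h1 h2
    exact ⟨l, by rw [h2], h1.symm⟩

lemma appList_var_inj : ∀ {l l' : List Lam} {y y' : ℕ},
    appList (var y) l = appList (var y') l' → y = y' ∧ l = l' := by
  intro l
  induction l using List.reverseRecOn with
  | nil =>
    intro l' y y' h
    induction l' using List.reverseRecOn with
    | nil => simp [appList] at h; exact ⟨h, rfl⟩
    | append_singleton l' a ih =>
      rw [appList_append_single] at h; simp [appList] at h
  | append_singleton l a ih =>
    intro l' y y' h
    induction l' using List.reverseRecOn with
    | nil => rw [appList_append_single] at h; simp [appList] at h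
    | append_singleton l' a' ih' =>
      rw [appList_append_single, appList_append_single] at h
      injection h with h1 h2
      obtain ⟨hy, hl⟩ := ih h1
      exact ⟨hy, by rw [hl, h2]⟩

lemma absN_not_abs_inj : ∀ {n n' : ℕ} {T T' : Lam}, ¬ IsAbs T → ¬ IsAbs T' →
    absN n T = absN n' T' → n = n' ∧ T = T' := by
  intro n
  induction n with
  | zero =>
    intro n' T T' hT hT' h
    cases n' with
    | zero => exact ⟨rfl, h⟩
    | succ n' => rw [absN] at h; subst h; exact absurd trivial hT
  | succ n ih =>
    intro n' T T' hT hT' h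
    cases n' with
    | zero => rw [absN] at h; rw [← h] at hT'; exact absurd trivial hT'
    | succ n' =>
      rw [absN, absN] at h
      injection h with h
      obtain ⟨h1, h2⟩ := ih hT hT' h
      exact ⟨by omega, h2⟩

lemma not_isAbs_appList (y : ℕ) (l : List Lam) : ¬ IsAbs (appList (var y) l) := by
  induction l using List.reverseRecOn with
  | nil => simp [appList, IsAbs]
  | append_singleton l a ih => rw [appList_append_single]; simp [IsAbs]

lemma mkHnf_inj {n y : ℕ} {args : List Lam} {n' y' : ℕ} {args' : List Lam}
    (h : mkHnf n y args = mkHnf n' y' args') : n = n' ∧ y = y' ∧ args = args' := by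
  unfold mkHnf at h
  obtain ⟨h1, h2⟩ := absN_not_abs_inj (not_isAbs_appList y args) (not_isAbs_appList y' args') h
  obtain ⟨h3, h4⟩ := appList_var_inj h2
  exact ⟨h1, h3, h4⟩

lemma no_headstep_of_spine : ∀ {S t : Lam}, HeadStep S t → ∀ y l, S = appList (var y) l → False := by
  intro S t h
  induction h with
  | beta t u =>
    intro y l hS
    obtain ⟨l', hl, hA⟩ := appList_eq_app hS.symm
    exact appList_ne_abs _ _ _ hA.symm
  | app t hna hs ih =>
    intro y l hS
    obtain ⟨l', hl, hA⟩ := appList_eq_app hS.symm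
    exact ih y l' hA
  | abs hs ih =>
    intro y l hS
    exact appList_ne_abs _ _ _ hS.symm

lemma no_headstep_mkHnf {n y : ℕ} {args : List Lam} {t : Lam}
    (h : HeadStep (mkHnf n y args) t) : False := by
  induction n generalizing t with
  | zero => exact no_headstep_of_spine h y args rfl
  | succ n ih =>
    unfold mkHnf absN at h
    cases h with
    | abs hs => exact ih hs

lemma headStep_det : ∀ {s t t' : Lam}, HeadStep s t → HeadStep s t' → t = t' := by
  intro s t t' h
  induction h generalizing t' with
  | beta a b =>
    intro h'
    cases h' with
    | beta => rfl
    | app _ hna _ => exact absurd trivial hna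
  | app c hna hs ih =>
    intro h'
    cases h' with
    | beta => exact absurd trivial hna
    | app _ _ hs' => rw [ih hs']
  | abs hs ih =>
    intro h'
    cases h' with
    | abs hs' => rw [ih hs']

lemma headSteps_det : ∀ {k k' : ℕ} {M H H' : Lam}, HeadSteps k M H → IsHnf H →
    HeadSteps k' M H' → IsHnf H' → k = k' ∧ H = H' := by
  intro k
  induction k with
  | zero =>
    intro k' M H H' h hH h' hH'
    cases k' with
    | zero => rw [HeadSteps] at h h'; subst h; subst h'; exact ⟨rfl, rfl⟩
    | succ k' =>
      obtain ⟨u, hu, _⟩ := h'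
      rw [HeadSteps] at h; subst h
      obtain ⟨n, y, args, rfl⟩ := hH
      exact absurd hu (fun hu => no_headstep_mkHnf hu)
  | succ k ih =>
    intro k' M H H' h hH h' hH'
    obtain ⟨u, hu, hrest⟩ := h
    cases k' with
    | zero =>
      rw [HeadSteps] at h'; subst h'
      obtain ⟨n, y, args, rfl⟩ := hH'
      exact absurd hu (fun hu => no_headstep_mkHnf hu)
    | succ k' =>
      obtain ⟨u', hu', hrest'⟩ := h'
      rw [headStep_det hu hu'] at hrest
      obtain ⟨h1, h2⟩ := ih hrest hH hrest' hH'
      exact ⟨by omega, h2⟩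

/-- The head-reduction data of a term is unique. -/
lemma hnf_data_unique {M : Lam} {k k' n n' y y' : ℕ} {args args' : List Lam}
    (h : HeadSteps k M (mkHnf n y args)) (h' : HeadSteps k' M (mkHnf n' y' args')) :
    k = k' ∧ n = n' ∧ y = y' ∧ args = args' := by
  obtain ⟨h1, h2⟩ := headSteps_det h ⟨n, y, args, rfl⟩ h' ⟨n', y', args', rfl⟩
  obtain ⟨h3, h4, h5⟩ := mkHnf_inj h2
  exact ⟨h1, h3, h4, h5⟩

/-! ### Part 2: list shape lemmas -/

lemma snoc_inj {l₁ l₂ : List ℕ} {x y : ℕ} (h : l₁ ++ [x] = l₂ ++ [y]) : l₁ = l₂ ∧ x = y := by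
  obtain ⟨h1, h2⟩ := List.append_inj' h rfl
  simp at h2
  exact ⟨h1, h2⟩

lemma split_replicate : ∀ (k : ℕ) {a : ℕ} {l p1 p2 : List ℕ} {c : ℕ},
    p1 ++ c :: p2 = List.replicate k a ++ l →
    (∃ m, m < k ∧ p1 = List.replicate m a ∧ c = a) ∨
      (∃ q1, p1 = List.replicate k a ++ q1 ∧ q1 ++ c :: p2 = l) := by
  intro k
  induction k with
  | zero => intro a l p1 p2 c h; exact Or.inr ⟨p1, by simp, by simpa using h⟩
  | succ k ih =>
    intro a l p1 p2 c h
    rw [List.replicate_succ] at h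
    cases p1 with
    | nil =>
      simp at h
      exact Or.inl ⟨0, by omega, rfl, h.1⟩
    | cons x p1' =>
      simp at h
      obtain ⟨hx, h⟩ := h
      rcases ih h with ⟨m, hm, h1, h2⟩ | ⟨q1, h1, h2⟩
      · exact Or.inl ⟨m+1, by omega, by rw [List.replicate_succ, hx, h1], h2⟩
      · exact Or.inr ⟨q1, by rw [List.replicate_succ, hx, h1]; simp, h2⟩

lemma ones_ne_zero_head {b : ℕ} {t r : List ℕ}
    (ht : t = [] ∨ ∃ q, t = 2 :: q) (h : List.replicate b 1 ++ t = 0 :: r) : False := by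
  cases b with
  | zero =>
    rcases ht with rfl | ⟨q, rfl⟩
    · simp at h
    · simp at h
  | succ b => rw [List.replicate_succ] at h; simp at h

lemma shape_ones : ∀ (b : ℕ) {b' : ℕ} {t t' : List ℕ},
    (t = [] ∨ ∃ q, t = 2 :: q) → (t' = [] ∨ ∃ q, t' = 2 :: q) →
    List.replicate b 1 ++ t = List.replicate b' 1 ++ t' → b = b' ∧ t = t' := by
  intro b
  induction b with
  | zero =>
    intro b' t t' ht ht' h
    cases b' with
    | zero => exact ⟨rfl, by simpa using h⟩
    | succ b' =>
      rw [List.replicate_succ] at h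
      simp at h
      rcases ht with rfl | ⟨q, rfl⟩
      · simp at h
      · simp at h
  | succ b ih =>
    intro b' t t' ht ht' h
    cases b' with
    | zero =>
      rw [List.replicate_succ] at h
      simp at h
      rcases ht' with rfl | ⟨q, rfl⟩
      · simp at h
      · simp at h
    | succ b' =>
      rw [List.replicate_succ, List.replicate_succ] at h
      simp at h
      obtain ⟨h1, h2⟩ := ih ht ht' h
      exact ⟨by omega, h2⟩

lemma shape_eq' : ∀ (a : ℕ) {a' b b' : ℕ} {t t' : List ℕ},
    (t = [] ∨ ∃ q, t = 2 :: q) → (t' = [] ∨ ∃ q, t' = 2 :: q) →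
    List.replicate a 0 ++ (List.replicate b 1 ++ t)
      = List.replicate a' 0 ++ (List.replicate b' 1 ++ t') →
    a = a' ∧ b = b' ∧ t = t' := by
  intro a
  induction a with
  | zero =>
    intro a' b b' t t' ht ht' h
    cases a' with
    | zero =>
      simp only [List.replicate, List.nil_append] at h
      obtain ⟨h1, h2⟩ := shape_ones b ht ht' h
      exact ⟨rfl, h1, h2⟩
    | succ a' =>
      rw [List.replicate_succ] at h
      simp only [List.nil_append, List.cons_append] at h
      exact absurd h (by intro h; exact ones_ne_zero_head ht h)
  | succ a ih =>
    intro a' b b' t t' ht ht' h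
    cases a' with
    | zero =>
      rw [List.replicate_succ] at h
      simp only [List.nil_append, List.cons_append] at h
      exact absurd h.symm (by intro h; exact ones_ne_zero_head ht' h)
    | succ a' =>
      rw [List.replicate_succ, List.replicate_succ] at h
      simp only [List.cons_append] at h
      injection h with _ h
      obtain ⟨h1, h2, h3⟩ := ih ht ht' h
      exact ⟨by omega, h2, h3⟩


/-! ### Part 3: CBT structural lemmas -/

lemma CBT_inv {M : Lam} {p : List ℕ} {o : BTN} {a : Option ℕ} (h : CBT M p o a) :
    (¬ HasHnf M ∧ p = [] ∧ o = BTN.bot ∧ a = none) ∨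
    (∃ k n y args, HeadSteps k M (mkHnf n y args) ∧
      ((∃ i, i < n ∧ p = List.replicate i 0 ∧ o = BTN.lam ∧
          a = if i = 0 then some k else none) ∨
       (∃ j, j < args.length ∧ p = List.replicate n 0 ++ List.replicate j 1 ∧ o = BTN.app ∧
          a = if n = 0 ∧ j = 0 then some k else none) ∨
       (p = List.replicate n 0 ++ List.replicate args.length 1 ∧ o = BTN.var y ∧
          a = if n = 0 ∧ args.length = 0 then some k else none) ∨
       (∃ i q, ∃ (hi : i < args.length),
          p = List.replicate n 0 ++ List.replicate (args.length - 1 - i) 1 ++ 2 :: q ∧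
          CBT (args.get ⟨i, hi⟩) q o a))) := by
  cases h with
  | bot h => exact Or.inl ⟨h, rfl, rfl, rfl⟩
  | @lam M k n y args i hk hi => exact Or.inr ⟨k,n,y,args,hk, Or.inl ⟨i, hi, rfl, rfl, rfl⟩⟩
  | @app M k n y args j hk hj => exact Or.inr ⟨k,n,y,args,hk, Or.inr (Or.inl ⟨j, hj, rfl, rfl, rfl⟩)⟩
  | @var M k n y args hk => exact Or.inr ⟨k,n,y,args,hk, Or.inr (Or.inr (Or.inl ⟨rfl, rfl, rfl⟩))⟩
  | @child M k n y args i q o a hk hi hq =>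
      exact Or.inr ⟨k,n,y,args,hk, Or.inr (Or.inr (Or.inr ⟨i, q, hi, rfl, hq⟩))⟩

lemma CBT_root (N : Lam) : ∃ o a, CBT N [] o a := by
  by_cases h : HasHnf N
  · obtain ⟨k, H, hs, n, y, args, rfl⟩ := h
    cases n with
    | succ n => exact ⟨BTN.lam, _, CBT.lam (i := 0) hs (Nat.succ_pos n)⟩
    | zero =>
      cases args with
      | nil => exact ⟨BTN.var y, _, CBT.var hs⟩
      | cons b bs => exact ⟨BTN.app, _, CBT.app (j := 0) hs (by simp)⟩
  · exact ⟨BTN.bot, none, CBT.bot h⟩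

lemma CBT_unique_aux : ∀ (l : ℕ) (p : List ℕ), p.length < l →
    ∀ {M : Lam} {o o' : BTN} {a a' : Option ℕ}, CBT M p o a → CBT M p o' a' →
    o = o' ∧ a = a' := by
  intro l
  induction l with
  | zero => intro p h; omega
  | succ l ih =>
    intro p hp M o o' a a' h h'
    rcases CBT_inv h with ⟨hn, rfl, rfl, rfl⟩ | ⟨k,n,y,args,hk,hcase⟩
    · rcases CBT_inv h' with ⟨_, _, rfl, rfl⟩ | ⟨k',n',y',args',hk',_⟩
      · exact ⟨rfl, rfl⟩
      · exact absurd ⟨k', _, hk', n',y',args',rfl⟩ hn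
    · rcases CBT_inv h' with ⟨hn', rfl, rfl, rfl⟩ | ⟨k',n',y',args',hk',hcase'⟩
      · exact absurd ⟨k, _, hk, n,y,args,rfl⟩ hn'
      · obtain ⟨hkk, hnn, hyy, haa⟩ := hnf_data_unique hk hk'
        subst hkk; subst hnn; subst hyy; subst haa
        rcases hcase with ⟨i,hi,hpe,rfl,rfl⟩ | ⟨j,hj,hpe,rfl,rfl⟩ | ⟨hpe,rfl,rfl⟩ | ⟨i,q,hi,hpe,hin⟩ <;>
          rcases hcase' with ⟨i',hi',hpe',rfl,rfl⟩ | ⟨j',hj',hpe',rfl,rfl⟩ | ⟨hpe',rfl,rfl⟩ | ⟨i',q',hi',hpe',hin'⟩ <;>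
          have hq2 := hpe.symm.trans hpe'
        -- lam lam
        · obtain ⟨rfl, -, -⟩ := shape_eq' (a := i) (b := 0) (t := []) (a' := i') (b' := 0) (t' := [])
            (Or.inl rfl) (Or.inl rfl) (by simpa using hq2)
          exact ⟨rfl, rfl⟩
        -- lam app
        · have := shape_eq' (a := i) (b := 0) (t := []) (a' := n) (b' := j') (t' := [])
            (Or.inl rfl) (Or.inl rfl) (by simpa using hq2)
          omega
        -- lam var
        · have := shape_eq' (a := i) (b := 0) (t := []) (a' := n) (b' := args.length) (t' := [])
            (Or.inl rfl) (Or.inl rfl) (by simpa using hq2)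
          omega
        -- lam child
        · have := shape_eq' (a := i) (b := 0) (t := []) (a' := n)
            (b' := args.length - 1 - i') (t' := 2 :: q')
            (Or.inl rfl) (Or.inr ⟨q', rfl⟩) (by simpa using hq2)
          simp at this
        -- app lam
        · have := shape_eq' (a := n) (b := j) (t := []) (a' := i') (b' := 0) (t' := [])
            (Or.inl rfl) (Or.inl rfl) (by simpa using hq2)
          omega
        -- app app
        · obtain ⟨-, rfl, -⟩ := shape_eq' (a := n) (b := j) (t := []) (a' := n) (b' := j') (t' := [])
            (Or.inl rfl) (Or.inl rfl) (by simpa using hq2)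
          exact ⟨rfl, rfl⟩
        -- app var
        · have := shape_eq' (a := n) (b := j) (t := []) (a' := n) (b' := args.length) (t' := [])
            (Or.inl rfl) (Or.inl rfl) (by simpa using hq2)
          omega
        -- app child
        · have := shape_eq' (a := n) (b := j) (t := []) (a' := n)
            (b' := args.length - 1 - i') (t' := 2 :: q')
            (Or.inl rfl) (Or.inr ⟨q', rfl⟩) (by simpa using hq2)
          simp at this
        -- var lam
        · have := shape_eq' (a := n) (b := args.length) (t := []) (a' := i') (b' := 0) (t' := [])
            (Or.inl rfl) (Or.inl rfl) (by simpa using hq2)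
          omega
        -- var app
        · have := shape_eq' (a := n) (b := args.length) (t := []) (a' := n) (b' := j') (t' := [])
            (Or.inl rfl) (Or.inl rfl) (by simpa using hq2)
          omega
        -- var var
        · exact ⟨rfl, rfl⟩
        -- var child
        · have := shape_eq' (a := n) (b := args.length) (t := []) (a' := n)
            (b' := args.length - 1 - i') (t' := 2 :: q')
            (Or.inl rfl) (Or.inr ⟨q', rfl⟩) (by simpa using hq2)
          simp at this
        -- child lam
        · have := shape_eq' (a := n) (b := args.length - 1 - i) (t := 2 :: q)
            (a' := i') (b' := 0) (t' := [])
            (Or.inr ⟨q, rfl⟩) (Or.inl rfl) (by simpa using hq2)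
          simp at this
        -- child app
        · have := shape_eq' (a := n) (b := args.length - 1 - i) (t := 2 :: q)
            (a' := n) (b' := j') (t' := [])
            (Or.inr ⟨q, rfl⟩) (Or.inl rfl) (by simpa using hq2)
          simp at this
        -- child var
        · have := shape_eq' (a := n) (b := args.length - 1 - i) (t := 2 :: q)
            (a' := n) (b' := args.length) (t' := [])
            (Or.inr ⟨q, rfl⟩) (Or.inl rfl) (by simpa using hq2)
          simp at this
        -- child child
        · obtain ⟨-, hb, ht⟩ := shape_eq' (a := n) (b := args.length - 1 - i) (t := 2 :: q)
            (a' := n) (b' := args.length - 1 - i') (t' := 2 :: q')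
            (Or.inr ⟨q, rfl⟩) (Or.inr ⟨q', rfl⟩) (by simpa using hq2)
          have hii : i = i' := by omega
          subst hii
          injection ht with ht1 ht2
          subst ht2
          refine ih q ?_ hin hin'
          rw [hpe] at hp
          simp at hp
          omega

lemma CBT_unique {M : Lam} {p : List ℕ} {o o' : BTN} {a a' : Option ℕ}
    (h : CBT M p o a) (h' : CBT M p o' a') : o = o' ∧ a = a' :=
  CBT_unique_aux (p.length + 1) p (by omega) h h'

lemma BTNode_unique {M : Lam} {p : List ℕ} {o o' : BTN}
    (h : BTNode M p o) (h' : BTNode M p o') : o = o' := by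
  obtain ⟨a, h⟩ := h; obtain ⟨a', h'⟩ := h'
  exact (CBT_unique h h').1


lemma CBT_branch : ∀ {M : Lam} {p : List ℕ} {o : BTN} {a : Option ℕ}, CBT M p o a →
    ∀ p1 c p2, p = p1 ++ c :: p2 →
    ∃ o1 a1, CBT M p1 o1 a1 ∧
      ((o1 = BTN.lam ∧ c = 0) ∨ (o1 = BTN.app ∧ (c = 1 ∨ c = 2))) := by
  intro M p o a h
  induction h with
  | bot h => intro p1 c p2 hp; exact absurd hp (by simp)
  | @lam M k n y args i hk hi =>
    intro p1 c p2 hp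
    rcases split_replicate i (l := ([] : List ℕ)) (by simpa using hp.symm) with
      ⟨m,hm,rfl,rfl⟩ | ⟨q1,rfl,h2⟩
    · exact ⟨BTN.lam, _, CBT.lam hk (by omega), Or.inl ⟨rfl, rfl⟩⟩
    · simp at h2
  | @app M k n y args j hk hj =>
    intro p1 c p2 hp
    rcases split_replicate n (l := List.replicate j 1) (by simpa using hp.symm) with
      ⟨m,hm,rfl,rfl⟩ | ⟨q1,rfl,h2⟩
    · exact ⟨BTN.lam, _, CBT.lam hk (by omega), Or.inl ⟨rfl, rfl⟩⟩
    · rcases split_replicate j (l := ([] : List ℕ)) (by simpa using h2) with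
        ⟨m,hm,rfl,rfl⟩ | ⟨q2,rfl,h3⟩
      · exact ⟨BTN.app, _, CBT.app hk (by omega), Or.inr ⟨rfl, Or.inl rfl⟩⟩
      · simp at h3
  | @var M k n y args hk =>
    intro p1 c p2 hp
    rcases split_replicate n (l := List.replicate args.length 1) (by simpa using hp.symm) with
      ⟨m,hm,rfl,rfl⟩ | ⟨q1,rfl,h2⟩
    · exact ⟨BTN.lam, _, CBT.lam hk (by omega), Or.inl ⟨rfl, rfl⟩⟩
    · rcases split_replicate args.length (l := ([] : List ℕ)) (by simpa using h2) with
        ⟨m,hm,rfl,rfl⟩ | ⟨q2,rfl,h3⟩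
      · exact ⟨BTN.app, _, CBT.app hk (by omega), Or.inr ⟨rfl, Or.inl rfl⟩⟩
      · simp at h3
  | @child M k n y args i q o a hk hi hq ih =>
    intro p1 c p2 hp
    rcases split_replicate n (l := List.replicate (args.length - 1 - i) 1 ++ 2 :: q)
        (by simpa using hp.symm) with ⟨m,hm,rfl,rfl⟩ | ⟨q1,rfl,h2⟩
    · exact ⟨BTN.lam, _, CBT.lam hk (by omega), Or.inl ⟨rfl, rfl⟩⟩
    · rcases split_replicate (args.length - 1 - i) (l := 2 :: q) h2 with
        ⟨m,hm,rfl,rfl⟩ | ⟨q2,rfl,h3⟩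
      · exact ⟨BTN.app, _, CBT.app hk (by omega), Or.inr ⟨rfl, Or.inl rfl⟩⟩
      · cases q2 with
        | nil =>
          simp at h3
          obtain ⟨rfl, rfl⟩ := h3
          exact ⟨BTN.app, if n = 0 ∧ (args.length - 1 - i) = 0 then some k else none,
            by simpa using CBT.app (j := args.length - 1 - i) hk (by omega),
            Or.inr ⟨rfl, Or.inr rfl⟩⟩
        | cons x q2' =>
          simp at h3
          obtain ⟨rfl, h3⟩ := h3
          obtain ⟨o1, a1, h1, hd⟩ := ih q2' c p2 h3.symm
          exact ⟨o1, a1, by simpa using CBT.child hk hi h1, hd⟩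

lemma CBT_prefix {M : Lam} {p : List ℕ} {o : BTN} {a : Option ℕ} (h : CBT M p o a) :
    ∀ q, q <+: p → ∃ o1 a1, CBT M q o1 a1 := by
  intro q hq
  obtain ⟨r, rfl⟩ := hq
  cases r with
  | nil => exact ⟨o, a, by simpa using h⟩
  | cons c r' =>
    obtain ⟨o1, a1, h1, -⟩ := CBT_branch h q c r' rfl
    exact ⟨o1, a1, h1⟩

lemma CBT_children {M : Lam} {p : List ℕ} {o : BTN} {a : Option ℕ} (h : CBT M p o a) :
    (o = BTN.lam → ∃ o1 a1, CBT M (p ++ [0]) o1 a1) ∧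
    (o = BTN.app → (∃ o1 a1, CBT M (p ++ [1]) o1 a1) ∧ (∃ o1 a1, CBT M (p ++ [2]) o1 a1)) := by
  induction h with
  | bot h => exact ⟨nofun, nofun⟩
  | @lam M k n y args i hk hi =>
    refine ⟨fun _ => ?_, nofun⟩
    have hrw : List.replicate i 0 ++ [0] = List.replicate (i+1) 0 := by
      simp [List.replicate_succ']
    rw [hrw]
    by_cases hn : i + 1 < n
    · exact ⟨BTN.lam, _, CBT.lam hk hn⟩
    · have hin : i + 1 = n := by omega
      subst hin
      cases args with
      | nil => exact ⟨BTN.var y, _, by simpa using CBT.var hk⟩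
      | cons b bs => exact ⟨BTN.app, _, by simpa using CBT.app (j := 0) hk (by simp)⟩
  | @app M k n y args j hk hj =>
    refine ⟨nofun, fun _ => ⟨?_, ?_⟩⟩
    · have hrw : (List.replicate n 0 ++ List.replicate j 1) ++ [1]
          = List.replicate n 0 ++ List.replicate (j+1) 1 := by
        simp [List.replicate_succ']
      rw [hrw]
      by_cases hl : j + 1 < args.length
      · exact ⟨BTN.app, _, CBT.app hk hl⟩
      · have : j + 1 = args.length := by omega
        rw [this]
        exact ⟨BTN.var y, _, CBT.var hk⟩
    · obtain ⟨o2, a2, hroot⟩ := CBT_root (args.get ⟨args.length - 1 - j, by omega⟩)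
      have hc := CBT.child hk (by omega : args.length - 1 - j < args.length) hroot
      rw [show args.length - 1 - (args.length - 1 - j) = j from by omega] at hc
      exact ⟨o2, a2, by simpa using hc⟩
  | @var M k n y args hk => exact ⟨nofun, nofun⟩
  | @child M k n y args i q o a hk hi hq ih =>
    refine ⟨fun ho => ?_, fun ho => ⟨?_, ?_⟩⟩
    · obtain ⟨o1, a1, h1⟩ := ih.1 ho
      exact ⟨o1, a1, by simpa using CBT.child hk hi h1⟩
    · obtain ⟨o1, a1, h1⟩ := (ih.2 ho).1
      exact ⟨o1, a1, by simpa using CBT.child hk hi h1⟩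
    · obtain ⟨o1, a1, h1⟩ := (ih.2 ho).2
      exact ⟨o1, a1, by simpa using CBT.child hk hi h1⟩

lemma CBT_mem_le {M : Lam} {p : List ℕ} {o : BTN} {a : Option ℕ} (h : CBT M p o a) :
    ∀ c ∈ p, c ≤ 2 := by
  induction h with
  | bot h => simp
  | @lam M k n y args i hk hi =>
    intro c hc; have := List.eq_of_mem_replicate hc; omega
  | @app M k n y args j hk hj =>
    intro c hc
    rcases List.mem_append.1 hc with hc | hc <;>
      (have := List.eq_of_mem_replicate hc; omega)
  | @var M k n y args hk =>
    intro c hc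
    rcases List.mem_append.1 hc with hc | hc <;>
      (have := List.eq_of_mem_replicate hc; omega)
  | @child M k n y args i q o a hk hi hq ih =>
    intro c hc
    simp only [List.append_assoc, List.mem_append, List.mem_cons] at hc
    rcases hc with hc | hc | rfl | hc
    · have := List.eq_of_mem_replicate hc; omega
    · have := List.eq_of_mem_replicate hc; omega
    · omega
    · exact ih c hc

lemma CBT_not_snoc1 : ∀ {M : Lam} {p : List ℕ} {o : BTN} {a : Option ℕ}, CBT M p o a →
    o = BTN.lam → ∀ r, p = r ++ [1] → False := by
  intro M p o a h
  induction h with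
  | bot h => exact fun heq => by cases heq
  | @lam M k n y args i hk hi =>
    intro _ r hp
    have h1 : (1 : ℕ) ∈ List.replicate i 0 := by rw [hp]; simp
    have := List.eq_of_mem_replicate h1; omega
  | @app M k n y args j hk hj => exact fun heq => by cases heq
  | @var M k n y args hk => exact fun heq => by cases heq
  | @child M k n y args i q o a hk hi hq ih =>
    intro heq r hp
    rcases List.eq_nil_or_concat' q with rfl | ⟨q', x, rfl⟩
    · have := (snoc_inj hp).2; omega
    · have hp2 : ((List.replicate n 0 ++ List.replicate (args.length - 1 - i) 1 ++ 2 :: q')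
          ++ [x]) = r ++ [1] := by simpa using hp
      obtain ⟨-, rfl⟩ := snoc_inj hp2
      exact ih heq q' rfl


/-! ### Part 4: the truncated tree is bounded (König) -/

def TreeT (M : Lam) (p : List ℕ) : Prop :=
  (∃ o a, CBT M p o a) ∧ ∀ q, q <+: p → q ≠ p → ¬ PeriodicAt M q

lemma TreeT_prefix {M : Lam} {p q : List ℕ} (h : TreeT M p) (hq : q <+: p) : TreeT M q := by
  obtain ⟨⟨o, a, hc⟩, hper⟩ := h
  refine ⟨CBT_prefix hc q hq, ?_⟩
  intro r hr hne
  refine hper r (hr.trans hq) ?_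
  have h1 : r.length < q.length :=
    lt_of_le_of_ne hr.length_le (fun h => hne (hr.eq_of_length h))
  have h2 := hq.length_le
  intro h; subst h; omega

def Unb (M : Lam) (p : List ℕ) : Prop :=
  TreeT M p ∧ ∀ n, ∃ q, TreeT M q ∧ p <+: q ∧ n ≤ q.length

lemma Unb_child {M : Lam} {p : List ℕ} (h : Unb M p) : ∃ c, Unb M (p ++ [c]) := by
  by_contra hcon
  push_neg at hcon
  have hb : ∀ c, ∃ N, ∀ q, TreeT M q → p ++ [c] <+: q → q.length < N := by
    intro c
    by_cases hT : TreeT M (p ++ [c])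
    · have := hcon c
      rw [Unb] at this
      push_neg at this
      obtain ⟨n, hn⟩ := this hT
      exact ⟨n, fun q hq hpre => hn q hq hpre⟩
    · exact ⟨0, fun q hq hpre => absurd (TreeT_prefix hq hpre) hT⟩
  obtain ⟨N0, h0⟩ := hb 0
  obtain ⟨N1, h1⟩ := hb 1
  obtain ⟨N2, h2⟩ := hb 2
  obtain ⟨q, hqT, hqpre, hqlen⟩ := h.2 (N0 + N1 + N2 + p.length + 1)
  obtain ⟨r, rfl⟩ := hqpre
  cases r with
  | nil => simp at hqlen
  | cons c r' =>
    have hc2 : c ≤ 2 := by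
      obtain ⟨⟨o, a, hcbt⟩, -⟩ := hqT
      exact CBT_mem_le hcbt c (by simp)
    have hpre2 : p ++ [c] <+: p ++ c :: r' := ⟨r', by simp⟩
    have hql : (p ++ c :: r').length < N0 + N1 + N2 := by
      interval_cases c
      · have := h0 _ hqT hpre2; omega
      · have := h1 _ hqT hpre2; omega
      · have := h2 _ hqT hpre2; omega
    omega

noncomputable def childFn (M : Lam) (p : List ℕ) : ℕ :=
  if h : Unb M p then Classical.choose (Unb_child h) else 0

noncomputable def pathSeq (M : Lam) : ℕ → List ℕ
  | 0 => []
  | n+1 => pathSeq M n ++ [childFn M (pathSeq M n)]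

lemma pathSeq_Unb {M : Lam} (h0 : Unb M []) : ∀ n, Unb M (pathSeq M n) := by
  intro n
  induction n with
  | zero => exact h0
  | succ n ih =>
    show Unb M (pathSeq M n ++ [childFn M (pathSeq M n)])
    rw [childFn, dif_pos ih]
    exact Classical.choose_spec (Unb_child ih)

lemma pathSeq_length (M : Lam) : ∀ n, (pathSeq M n).length = n := by
  intro n
  induction n with
  | zero => rfl
  | succ n ih => show (pathSeq M n ++ _).length = n + 1; simp [ih]

lemma pathSeq_ofFn (M : Lam) :
    ∀ n, pathSeq M n = List.ofFn (fun i : Fin n => childFn M (pathSeq M i)) := by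
  intro n
  induction n with
  | zero => rfl
  | succ n ih =>
    rw [List.ofFn_succ']
    show pathSeq M n ++ [childFn M (pathSeq M n)] = _
    simp only [Fin.coe_castSucc, Fin.val_last, List.concat_eq_append]
    rw [← ih]

lemma exists_bound {M : Lam} (hM : LocallyPeriodic M) :
    ∃ D, ∀ p, TreeT M p → p.length ≤ D := by
  by_contra hD
  push_neg at hD
  have h0 : Unb M [] := by
    refine ⟨⟨CBT_root M, fun q hq hne => absurd (List.prefix_nil.mp hq) hne⟩, fun n => ?_⟩
    obtain ⟨p, hp, hl⟩ := hD n
    exact ⟨p, hp, List.nil_prefix, by omega⟩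
  have hpath : ∀ n : ℕ, ∃ o, BTNode M
      (List.ofFn fun i : Fin n => childFn M (pathSeq M i)) o := by
    intro n
    rw [← pathSeq_ofFn]
    obtain ⟨o, a, hc⟩ := (pathSeq_Unb h0 n).1.1
    exact ⟨o, a, hc⟩
  obtain ⟨n, hper⟩ := hM (fun m => childFn M (pathSeq M m)) hpath
  rw [← pathSeq_ofFn] at hper
  have hT := (pathSeq_Unb h0 (n+1)).1
  refine hT.2 (pathSeq M n) ⟨[childFn M (pathSeq M n)], rfl⟩ ?_ hper
  intro h
  have := pathSeq_length M n
  have := pathSeq_length M (n+1)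
  rw [h] at *
  omega


/-! ### Part 5: building the Böhm tree context -/

noncomputable def nodeOf (M : Lam) (p : List ℕ) : BTN :=
  if h : ∃ o a, CBT M p o a then h.choose else BTN.bot

lemma nodeOf_spec {M : Lam} {p : List ℕ} (h : ∃ o a, CBT M p o a) :
    ∃ a, CBT M p (nodeOf M p) a := by
  rw [nodeOf, dif_pos h]; exact h.choose_spec

lemma nodeOf_eq {M : Lam} {p : List ℕ} {o : BTN} (h : BTNode M p o) : nodeOf M p = o := by
  obtain ⟨a, hc⟩ := h
  obtain ⟨a', hc'⟩ := nodeOf_spec ⟨o, a, hc⟩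
  exact (CBT_unique hc' hc).1

noncomputable def build (M : Lam) : ℕ → List ℕ → LamB
  | 0, _ => LamB.bot
  | f+1, p =>
    if PeriodicAt M p then LamB.hole (Encodable.encode p)
    else match nodeOf M p with
      | BTN.bot => LamB.bot
      | BTN.var y => LamB.var y
      | BTN.lam => LamB.abs (build M f (p ++ [0]))
      | BTN.app => LamB.app (build M f (p ++ [1])) (build M f (p ++ [2]))

lemma toCN_inj {o o' : BTN} (h : BTN.toCN o = BTN.toCN o') : o = o' := by
  cases o <;> cases o' <;> simp_all [BTN.toCN]

lemma toCN_ne_hole (o : BTN) (i : ℕ) : BTN.toCN o ≠ CN.hole i := by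
  cases o <;> simp [BTN.toCN]

lemma build_per {M : Lam} {f : ℕ} {p : List ℕ} (hper : PeriodicAt M p) :
    build M (f+1) p = LamB.hole (Encodable.encode p) := by
  rw [build, if_pos hper]

lemma build_bot {M : Lam} {f : ℕ} {p : List ℕ} (hper : ¬ PeriodicAt M p)
    (h : nodeOf M p = BTN.bot) : build M (f+1) p = LamB.bot := by
  rw [build, if_neg hper, h]

lemma build_var {M : Lam} {f : ℕ} {p : List ℕ} {y : ℕ} (hper : ¬ PeriodicAt M p)
    (h : nodeOf M p = BTN.var y) : build M (f+1) p = LamB.var y := by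
  rw [build, if_neg hper, h]

lemma build_lam {M : Lam} {f : ℕ} {p : List ℕ} (hper : ¬ PeriodicAt M p)
    (h : nodeOf M p = BTN.lam) : build M (f+1) p = LamB.abs (build M f (p ++ [0])) := by
  rw [build, if_neg hper, h]

lemma build_app {M : Lam} {f : ℕ} {p : List ℕ} (hper : ¬ PeriodicAt M p)
    (h : nodeOf M p = BTN.app) :
    build M (f+1) p = LamB.app (build M f (p ++ [1])) (build M f (p ++ [2])) := by
  rw [build, if_neg hper, h]

lemma build_head {M : Lam} {f : ℕ} {p : List ℕ} (hper : ¬ PeriodicAt M p) :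
    LamB.nodeAt (build M (f+1) p) [] = some (BTN.toCN (nodeOf M p)) := by
  cases h : nodeOf M p with
  | bot => rw [build_bot hper h]; rfl
  | var y => rw [build_var hper h]; rfl
  | lam => rw [build_lam hper h]; rfl
  | app => rw [build_app hper h]; rfl


lemma TreeT_extend {M : Lam} {p : List ℕ} {c : ℕ} (h : TreeT M p) (hnp : ¬ PeriodicAt M p)
    (hpos : ∃ o a, CBT M (p ++ [c]) o a) : TreeT M (p ++ [c]) := by
  refine ⟨hpos, fun q hq hne => ?_⟩
  have hlen : q.length ≤ p.length := by
    have h1 := hq.length_le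
    simp only [List.length_append, List.length_cons, List.length_nil] at h1
    rcases Nat.lt_or_ge q.length (p.length + 1) with h2 | h2
    · omega
    · exfalso; exact hne (hq.eq_of_length (by simp; omega))
  have hq' : q <+: p := List.prefix_of_prefix_length_le hq (List.prefix_append p [c]) hlen
  by_cases hqp : q = p
  · subst hqp; exact hnp
  · exact h.2 q hq' hqp

lemma TreeT_child_lam {M : Lam} {p : List ℕ} (h : TreeT M p) (hnp : ¬ PeriodicAt M p)
    (hno : nodeOf M p = BTN.lam) : TreeT M (p ++ [0]) := by
  obtain ⟨a, hc⟩ := nodeOf_spec h.1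
  rw [hno] at hc
  exact TreeT_extend h hnp ((CBT_children hc).1 rfl)

lemma TreeT_child_app {M : Lam} {p : List ℕ} (h : TreeT M p) (hnp : ¬ PeriodicAt M p)
    (hno : nodeOf M p = BTN.app) : TreeT M (p ++ [1]) ∧ TreeT M (p ++ [2]) := by
  obtain ⟨a, hc⟩ := nodeOf_spec h.1
  rw [hno] at hc
  obtain ⟨h1, h2⟩ := (CBT_children hc).2 rfl
  exact ⟨TreeT_extend h hnp h1, TreeT_extend h hnp h2⟩

lemma build_sound {M : Lam} {D : ℕ} (hD : ∀ p, TreeT M p → p.length ≤ D) :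
    ∀ (q : List ℕ) (f : ℕ) (p : List ℕ), TreeT M p → D + 1 ≤ f + p.length →
    ∀ o, LamB.nodeAt (build M f p) q = some (BTN.toCN o) → BTNode M (p ++ q) o := by
  intro q
  induction q with
  | nil =>
    intro f p hT hf o h
    have hlen := hD p hT
    cases f with
    | zero => omega
    | succ f =>
      by_cases hper : PeriodicAt M p
      · rw [build_per hper] at h
        simp only [LamB.nodeAt, LamB.head] at h
        injection h with h
        exact absurd h.symm (toCN_ne_hole o _)
      · rw [build_head hper] at h
        injection h with h
        obtain ⟨a, hc⟩ := nodeOf_spec hT.1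
        rw [toCN_inj h] at hc
        exact ⟨a, by simpa using hc⟩
  | cons c q' ih =>
    intro f p hT hf o h
    have hlen := hD p hT
    cases f with
    | zero => omega
    | succ f =>
      by_cases hper : PeriodicAt M p
      · rw [build_per hper] at h
        simp [LamB.nodeAt] at h
      · cases hno : nodeOf M p with
        | bot => rw [build_bot hper hno] at h; simp [LamB.nodeAt] at h
        | var y => rw [build_var hper hno] at h; simp [LamB.nodeAt] at h
        | lam =>
          rw [build_lam hper hno] at h
          match c, h with
          | 0, h =>
            have hT' := TreeT_child_lam hT hper hno
            have := ih f (p ++ [0]) hT' (by simp; omega) o h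
            simpa using this
          | c+1, h => simp [LamB.nodeAt] at h
        | app =>
          rw [build_app hper hno] at h
          obtain ⟨hT1, hT2⟩ := TreeT_child_app hT hper hno
          match c, h with
          | 1, h =>
            have := ih f (p ++ [1]) hT1 (by simp; omega) o h
            simpa using this
          | 2, h =>
            have := ih f (p ++ [2]) hT2 (by simp; omega) o h
            simpa using this
          | 0, h => simp [LamB.nodeAt] at h
          | c+3, h => simp [LamB.nodeAt] at h

lemma build_complete {M : Lam} {D : ℕ} (hD : ∀ p, TreeT M p → p.length ≤ D) :
    ∀ (q : List ℕ) (f : ℕ) (p : List ℕ), TreeT M p → D + 1 ≤ f + p.length →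
    ∀ o, BTNode M (p ++ q) o →
    LamB.nodeAt (build M f p) q = some (BTN.toCN o) ∨
      ∃ q1 r i, q = q1 ++ r ∧ LamB.nodeAt (build M f p) q1 = some (CN.hole i) := by
  intro q
  induction q with
  | nil =>
    intro f p hT hf o h
    have hlen := hD p hT
    cases f with
    | zero => omega
    | succ f =>
      by_cases hper : PeriodicAt M p
      · exact Or.inr ⟨[], [], Encodable.encode p, rfl, by rw [build_per hper]; rfl⟩
      · left
        rw [build_head hper]
        have : nodeOf M p = o := nodeOf_eq (by simpa using h)
        rw [this]
  | cons c q' ih =>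
    intro f p hT hf o h
    have hlen := hD p hT
    cases f with
    | zero => omega
    | succ f =>
      by_cases hper : PeriodicAt M p
      · exact Or.inr ⟨[], c :: q', Encodable.encode p, by simp, by rw [build_per hper]; rfl⟩
      · obtain ⟨a0, hcb⟩ := h
        obtain ⟨o1, a1, h1, hd⟩ := CBT_branch hcb p c q' rfl
        have hno : nodeOf M p = o1 := nodeOf_eq ⟨a1, h1⟩
        rcases hd with ⟨rfl, rfl⟩ | ⟨rfl, hc12⟩
        · have hT' := TreeT_child_lam hT hper hno
          rw [build_lam hper hno]
          rcases ih f (p ++ [0]) hT' (by simp; omega) o (by simpa [BTNode] using (⟨a0, hcb⟩ : BTNode M _ o)) with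
            hL | ⟨q1, r, i, rfl, hH⟩
          · exact Or.inl hL
          · exact Or.inr ⟨0 :: q1, r, i, rfl, hH⟩
        · obtain ⟨hT1, hT2⟩ := TreeT_child_app hT hper hno
          rw [build_app hper hno]
          rcases hc12 with rfl | rfl
          · rcases ih f (p ++ [1]) hT1 (by simp; omega) o (by simpa [BTNode] using (⟨a0, hcb⟩ : BTNode M _ o)) with
              hL | ⟨q1, r, i, rfl, hH⟩
            · exact Or.inl hL
            · exact Or.inr ⟨1 :: q1, r, i, rfl, hH⟩
          · rcases ih f (p ++ [2]) hT2 (by simp; omega) o (by simpa [BTNode] using (⟨a0, hcb⟩ : BTNode M _ o)) with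
              hL | ⟨q1, r, i, rfl, hH⟩
            · exact Or.inl hL
            · exact Or.inr ⟨2 :: q1, r, i, rfl, hH⟩

lemma build_holes {M : Lam} {D : ℕ} (hD : ∀ p, TreeT M p → p.length ≤ D) :
    ∀ (q : List ℕ) (f : ℕ) (p : List ℕ), TreeT M p → D + 1 ≤ f + p.length →
    ∀ i, LamB.nodeAt (build M f p) q = some (CN.hole i) →
    PeriodicAt M (p ++ q) ∧ i = Encodable.encode (p ++ q) := by
  intro q
  induction q with
  | nil =>
    intro f p hT hf i h
    have hlen := hD p hT
    cases f with
    | zero => omega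
    | succ f =>
      by_cases hper : PeriodicAt M p
      · rw [build_per hper] at h
        simp only [LamB.nodeAt, LamB.head] at h
        injection h with h
        injection h with h
        exact ⟨by simpa using hper, by simp [h]⟩
      · rw [build_head hper] at h
        injection h with h
        exact absurd h (toCN_ne_hole _ _)
  | cons c q' ih =>
    intro f p hT hf i h
    have hlen := hD p hT
    cases f with
    | zero => omega
    | succ f =>
      by_cases hper : PeriodicAt M p
      · rw [build_per hper] at h; simp [LamB.nodeAt] at h
      · cases hno : nodeOf M p with
        | bot => rw [build_bot hper hno] at h; simp [LamB.nodeAt] at h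
        | var y => rw [build_var hper hno] at h; simp [LamB.nodeAt] at h
        | lam =>
          rw [build_lam hper hno] at h
          match c, h with
          | 0, h =>
            have hT' := TreeT_child_lam hT hper hno
            have := ih f (p ++ [0]) hT' (by simp; omega) i h
            simpa using this
          | c+1, h => simp [LamB.nodeAt] at h
        | app =>
          rw [build_app hper hno] at h
          obtain ⟨hT1, hT2⟩ := TreeT_child_app hT hper hno
          match c, h with
          | 1, h =>
            have := ih f (p ++ [1]) hT1 (by simp; omega) i h
            simpa using this
          | 2, h =>
            have := ih f (p ++ [2]) hT2 (by simp; omega) i h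
            simpa using this
          | 0, h => simp [LamB.nodeAt] at h
          | c+3, h => simp [LamB.nodeAt] at h

lemma build_not_abs {M : Lam} {f : ℕ} {p : List ℕ}
    (hnl : nodeOf M p ≠ BTN.lam) : ∀ t, build M f p ≠ LamB.abs t := by
  intro t
  cases f with
  | zero => rw [build]; simp
  | succ f =>
    by_cases hper : PeriodicAt M p
    · rw [build_per hper]; simp
    · cases hno : nodeOf M p with
      | bot => rw [build_bot hper hno]; simp
      | var y => rw [build_var hper hno]; simp
      | lam => exact absurd hno hnl
      | app => rw [build_app hper hno]; simp

lemma build_RF {M : Lam} : ∀ (f : ℕ) (p : List ℕ), TreeT M p →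
    LamB.RedexFree (build M f p) := by
  intro f
  induction f with
  | zero => intro p hT; rw [build]; trivial
  | succ f ih =>
    intro p hT
    by_cases hper : PeriodicAt M p
    · rw [build_per hper]; trivial
    · cases hno : nodeOf M p with
      | bot => rw [build_bot hper hno]; trivial
      | var y => rw [build_var hper hno]; trivial
      | lam =>
        rw [build_lam hper hno]
        exact ih (p ++ [0]) (TreeT_child_lam hT hper hno)
      | app =>
        rw [build_app hper hno]
        obtain ⟨hT1, hT2⟩ := TreeT_child_app hT hper hno
        have hnabs : nodeOf M (p ++ [1]) ≠ BTN.lam := by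
          intro he
          obtain ⟨a, hc⟩ := nodeOf_spec hT1.1
          rw [he] at hc
          exact CBT_not_snoc1 hc rfl p rfl
        have h1 := ih (p ++ [1]) hT1
        have h2 := ih (p ++ [2]) hT2
        cases hL : build M f (p ++ [1]) with
        | abs t => exact absurd hL (build_not_abs hnabs t)
        | var n => rw [hL] at h1; exact ⟨h1, h2⟩
        | app s t => rw [hL] at h1; exact ⟨h1, h2⟩
        | bot => rw [hL] at h1; exact ⟨h1, h2⟩
        | hole n => rw [hL] at h1; exact ⟨h1, h2⟩


/-! ### Part 6: depth of a context -/

def depthB : LamB → ℕ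
  | LamB.var _ => 0
  | LamB.bot => 0
  | LamB.hole _ => 0
  | LamB.abs t => depthB t + 1
  | LamB.app s t => max (depthB s) (depthB t) + 1

lemma nodeAt_none : ∀ (C : LamB) (p : List ℕ), depthB C < p.length → LamB.nodeAt C p = none := by
  intro C
  induction C with
  | var n =>
    intro p h
    cases p with
    | nil => exact absurd h (Nat.not_lt_zero _)
    | cons c p' => simp [LamB.nodeAt]
  | bot =>
    intro p h
    cases p with
    | nil => exact absurd h (Nat.not_lt_zero _)
    | cons c p' => simp [LamB.nodeAt]
  | hole i =>
    intro p h
    cases p with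
    | nil => exact absurd h (Nat.not_lt_zero _)
    | cons c p' => simp [LamB.nodeAt]
  | abs t ih =>
    intro p h
    cases p with
    | nil => exact absurd h (Nat.not_lt_zero _)
    | cons c p' =>
      match c with
      | 0 => exact ih p' (by simp [depthB] at h ⊢; omega)
      | c+1 => simp [LamB.nodeAt]
  | app s t ihs iht =>
    intro p h
    cases p with
    | nil => exact absurd h (Nat.not_lt_zero _)
    | cons c p' =>
      match c with
      | 0 => rfl
      | 1 => exact ihs p' (by simp [depthB] at h ⊢; omega)
      | 2 => exact iht p' (by simp [depthB] at h ⊢; omega)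
      | c+3 => rfl
/-- a λ-term is locally periodic iff it is globally periodic. -/
theorem locally_periodic_iff_globally_periodic (M : Lam) :
    LocallyPeriodic M ↔ GloballyPeriodic M := by
  constructor
  · -- locally periodic → globally periodic
    intro hM
    obtain ⟨D, hD⟩ := exists_bound hM
    have hT0 : TreeT M [] :=
      ⟨CBT_root M, fun q hq hne => absurd (List.prefix_nil.mp hq) hne⟩
    have hper0 : ¬ PeriodicAt M [] := fun h => h.1 rfl
    refine ⟨build M (D+1) [],
      fun i => if h : ∃ R p, i = Encodable.encode p ∧ TermAt M p R ∧ Conv M R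
        then h.choose else M,
      build_RF (D+1) [] hT0, ?_, ?_, ?_, ?_⟩
    · -- not a bare hole
      intro i
      cases hno : nodeOf M [] with
      | bot => rw [build_bot hper0 hno]; simp
      | var y => rw [build_var hper0 hno]; simp
      | lam => rw [build_lam hper0 hno]; simp
      | app => rw [build_app hper0 hno]; simp
    · -- soundness
      intro p o h
      have := build_sound hD p (D+1) [] hT0 (by simp) o h
      simpa using this
    · -- completeness
      intro p o h
      have := build_complete hD p (D+1) [] hT0 (by simp) o (by simpa using h)
      simpa using this
    · -- holes
      intro p i h
      obtain ⟨hper, hi⟩ := build_holes hD p (D+1) [] hT0 (by simp) i h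
      simp only [List.nil_append] at hper hi
      obtain ⟨hne, hpos, R, hR, hConv⟩ := hper
      have hex : ∃ R p', i = Encodable.encode p' ∧ TermAt M p' R ∧ Conv M R :=
        ⟨R, p, hi, hR, hConv⟩
      simp only []
      rw [dif_pos hex]
      obtain ⟨p', hpe, hT', hC'⟩ := hex.choose_spec
      have hpp : p' = p := Encodable.encode_injective (by rw [← hpe, ← hi])
      rw [hpp] at hT'
      exact ⟨hT', hC'⟩
  · -- globally periodic → locally periodic
    intro hG π hπ
    obtain ⟨C, Ms, hRF, hnh, hsound, hcomp, hholes⟩ := hG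
    obtain ⟨o, ho⟩ := hπ (depthB C + 1)
    rcases hcomp _ o ho with hL | ⟨q, r, i, hqr, hhole⟩
    · rw [nodeAt_none C _ (by simp)] at hL
      cases hL
    · obtain ⟨hTA, hConv⟩ := hholes q i hhole
      have hqne : q ≠ [] := by
        intro h
        subst h
        cases C with
        | var n => simp [LamB.nodeAt, LamB.head] at hhole
        | app s t => simp [LamB.nodeAt, LamB.head] at hhole
        | abs t => simp [LamB.nodeAt, LamB.head] at hhole
        | bot => simp [LamB.nodeAt, LamB.head] at hhole
        | hole j =>
          simp [LamB.nodeAt, LamB.head] at hhole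
          exact hnh j rfl
      have hpre : q <+: List.ofFn (fun i : Fin (depthB C + 1) => π i) := ⟨r, hqr.symm⟩
      have hlen : q.length ≤ depthB C + 1 := by
        have := hpre.length_le
        simpa using this
      have hofn : (List.ofFn fun i : Fin q.length => π i) = q := by
        apply List.ext_getElem (by simp)
        intro j h1 h2
        have e1 : (q ++ r)[j]'(by simp; omega) = q[j]'h2 := List.getElem_append_left h2
        have e2 := List.getElem_of_eq hqr
          (by simp; omega : j < (List.ofFn fun i : Fin (depthB C + 1) => π i).length)
        rw [List.getElem_ofFn] at e2
        rw [List.getElem_ofFn]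
        exact e2.trans e1
      refine ⟨q.length, ?_⟩
      rw [hofn]
      refine ⟨hqne, ?_, Ms i, hTA, hConv⟩
      obtain ⟨o', ho'⟩ := hπ q.length
      rw [hofn] at ho'
      exact ⟨o', ho'⟩

end Lam
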